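/- The multiparametric GL R-matrix is invertible, and its inverse is obtained by inverting all deformation parameters: R_{q,r} · R_{q⁻¹,r⁻¹} = Id, i.e. Σ_{C,D} (R_{q,r})^{AB}_{CD} (R_{q⁻¹,r⁻¹})^{CD}_{EF} = δ^A_E δ^B_F for all A,B,E,F. -/

import Mathlib

open Finset

/-- Kronecker delta with values in `ℂ`. -/
def kd {α : Type*} [DecidableEq α] (a b : α) : ℂ := if a = b then 1 else 0

/-- The multiparametric `GL_{q,r}(N)` R-matrix.  Indices are 0-based: the paper index
`A ∈ {1,…,N}` corresponds to `A.val + 1`.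
`R^{AB}_{CD} = δ^A_C δ^B_D (r/q_{AB} + (r−1)δ^{AB}) + (r−r⁻¹) δ^A_D δ^B_C θ^{AB}`,
with `θ^{AB} = 1` iff `A > B`. -/
noncomputable def Rgl (N : ℕ) (r : ℂ) (q : Fin N → Fin N → ℂ)
    (A B C D : Fin N) : ℂ :=
  kd A C * kd B D * (r / q A B + (r - 1) * kd A B)
    + (r - r⁻¹) * kd A D * kd B C * (if B < A then 1 else 0)

/-- The R-matrix with all deformation parameters inverted: `R_{q⁻¹,r⁻¹}`. -/
noncomputable def RglInv (N : ℕ) (r : ℂ) (q : Fin N → Fin N → ℂ)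
    (A B C D : Fin N) : ℂ :=
  Rgl N r⁻¹ (fun a b => (q a b)⁻¹) A B C D

set_option linter.unnecessarySeqFocus false in
lemma key (N : ℕ) (r : ℂ) (q : Fin N → Fin N → ℂ) (A B : Fin N) (g : Fin N → Fin N → ℂ) :
    ∑ C, ∑ D, Rgl N r q A B C D * g C D
      = (r / q A B + (r-1) * kd A B) * g A B
        + (r - r⁻¹) * (if B < A then g B A else 0) := by
  simp only [Rgl, kd, add_mul, Finset.sum_add_distrib, ite_mul, one_mul, zero_mul,
    mul_ite, mul_one, mul_zero, Finset.sum_ite_eq, Finset.mem_univ, if_true,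
    Finset.sum_ite_eq', Finset.sum_const_zero]
  ring_nf
  congr 1
  by_cases h : B < A <;> simp [h, Finset.sum_ite_eq, Finset.sum_ite_eq'] <;> ring

/-- the multiparametric GL R-matrix is invertible, with inverse obtained by
inverting all the deformation parameters: `R_{q,r} · R_{q⁻¹,r⁻¹} = Id`. -/
theorem statement8 (N : ℕ) (hN : 1 ≤ N) (r : ℂ) (hr : r ≠ 0)
    (q : Fin N → Fin N → ℂ) (hq0 : ∀ A B, q A B ≠ 0)
    (hqAA : ∀ A, q A A = r) (hqBA : ∀ A B, q B A * q A B = r ^ 2) :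
    ∀ A B E F : Fin N,
      (∑ C : Fin N, ∑ D : Fin N, Rgl N r q A B C D * RglInv N r q C D E F)
        = kd A E * kd B F := by

  intro A B E F
  rw [key]
  rcases lt_trichotomy A B with h | h | h
  · simp only [RglInv, Rgl, kd, if_neg h.ne, if_neg h.ne', if_neg (not_lt.2 h.le)]
    have := hq0 A B
    field_simp
    split_ifs <;> ring
  · subst h
    simp only [RglInv, Rgl, kd, if_pos rfl, if_neg (lt_irrefl A), hqAA]
    field_simp
    simp only [↓reduceIte]
    split_ifs <;> ring
  · simp only [RglInv, Rgl, kd, if_neg h.ne, if_neg h.ne', if_pos h, if_neg (not_lt.2 h.le)]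
    have h2 := hqBA A B
    have := hq0 A B
    have := hq0 B A
    field_simp
    split_ifs <;> ring_nf
    all_goals linear_combination (r^2 - 1) * h2
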